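/- The number 2·(i+j)!·(i+j+1)!·(i+j+2)! / (i!·(i+1)!·(i+2)!·j!·(j+1)!·(j+2)!) is a positive integer for all natural numbers i, j. -/

import Mathlib

lemma baxter_poly_id (x y : ℚ) :
    ((x+3)*(x+4)*(y+3)*(y+4))^3
    + ((y+1)*(y+2)*(y+3)*(y+4)) * ((x+2)*(x+3)*(x+4)*(y+4))^2
    + ((x+1)*(x+2)*(x+3)*(x+4)) * ((x+4)*(y+2)*(y+3)*(y+4))^2
    - 2 * ((x+2)*(x+3)*(x+4)*(y+4)) * ((x+3)*(x+4)*(y+3)*(y+4)) * ((x+4)*(y+2)*(y+3)*(y+4))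
    - ((x+1)*(x+2)*(x+3)*(x+4)) * ((x+3)*(x+4)*(y+3)*(y+4)) * ((y+1)*(y+2)*(y+3)*(y+4))
    = 2*(x+y+5)^2*(x+y+6)*(x+3)*(x+4)^2*(y+3)*(y+4)^2 := by
  ring

set_option maxHeartbeats 1000000 in
theorem baxter_formula_posint (i j : ℕ) :
    ∃ m : ℕ, 0 < m ∧
      (m : ℚ) = 2 * (Nat.factorial (i+j) : ℚ) * (Nat.factorial (i+j+1)) * (Nat.factorial (i+j+2)) /
        ((Nat.factorial i) * (Nat.factorial (i+1)) * (Nat.factorial (i+2)) *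
         (Nat.factorial j) * (Nat.factorial (j+1)) * (Nat.factorial (j+2))) := by
  have hf : ∀ k : ℕ, ((Nat.factorial k : ℚ)) ≠ 0 := fun k => by
    exact_mod_cast k.factorial_ne_zero
  have ea : ∀ k:ℕ, (Nat.factorial (k+1) : ℚ) = (k+1) * Nat.factorial k := fun k => by
    rw [Nat.factorial_succ]; push_cast; ring
  obtain hi | hi := lt_or_ge i 2
  · interval_cases i
    · refine ⟨1, one_pos, ?_⟩
      rw [show (0:ℕ)+j = j from by omega]
      rw [show Nat.factorial 0 = 1 from rfl, show Nat.factorial 1 = 1 from rfl,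
          show Nat.factorial 2 = 2 from rfl]
      field_simp
      norm_num
    · refine ⟨(j+3).choose 3, Nat.choose_pos (by omega), ?_⟩
      rw [Nat.cast_choose ℚ (by omega), show j+3-3 = j from by omega]
      rw [show (1:ℕ)+j = j+1 from by omega, show j+1+1 = j+2 from rfl,
          show j+1+2 = j+3 from rfl,
          show Nat.factorial 1 = 1 from rfl, show Nat.factorial (1+1) = 2 from rfl,
          show Nat.factorial (1+2) = 6 from rfl]
      rw [
          show (Nat.factorial (j+3) : ℚ) = (j+3)*(j+2)*(j+1)*Nat.factorial j from by
            rw [ea (j+2), ea (j+1), ea j]; push_cast; ring,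
          show (Nat.factorial (j+2) : ℚ) = (j+2)*(j+1)*Nat.factorial j from by
            rw [ea (j+1), ea j]; push_cast; ring,
          show (Nat.factorial (j+1) : ℚ) = (j+1)*Nat.factorial j from ea j]
      field_simp
      ring
  obtain hj | hj := lt_or_ge j 2
  · interval_cases j
    · refine ⟨1, one_pos, ?_⟩
      rw [show i+0 = i from by omega]
      rw [show Nat.factorial 0 = 1 from rfl, show Nat.factorial 1 = 1 from rfl,
          show Nat.factorial 2 = 2 from rfl]
      field_simp
      ring
    · refine ⟨(i+3).choose 3, Nat.choose_pos (by omega), ?_⟩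
      rw [Nat.cast_choose ℚ (by omega), show i+3-3 = i from by omega]
      rw [show i+1+1 = i+2 from rfl, show i+1+2 = i+3 from rfl,
          show Nat.factorial 1 = 1 from rfl, show Nat.factorial (1+1) = 2 from rfl,
          show Nat.factorial (1+2) = 6 from rfl]
      rw [
          show (Nat.factorial (i+3) : ℚ) = (i+3)*(i+2)*(i+1)*Nat.factorial i from by
            rw [ea (i+2), ea (i+1), ea i]; push_cast; ring,
          show (Nat.factorial (i+2) : ℚ) = (i+2)*(i+1)*Nat.factorial i from by
            rw [ea (i+1), ea i]; push_cast; ring,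
          show (Nat.factorial (i+1) : ℚ) = (i+1)*Nat.factorial i from ea i]
      field_simp
      ring
  obtain ⟨a, rfl⟩ : ∃ a, i = a + 2 := ⟨i - 2, by omega⟩
  obtain ⟨b, rfl⟩ : ∃ b, j = b + 2 := ⟨j - 2, by omega⟩
  set n : ℕ := a + b + 4 with hn
  have fa2 : (Nat.factorial (a+2) : ℚ) = (a+1)*(a+2)*Nat.factorial a := by
    rw [ea (a+1), ea a]; push_cast; ring
  have fa3 : (Nat.factorial (a+3) : ℚ) = (a+1)*(a+2)*(a+3)*Nat.factorial a := by
    rw [ea (a+2), fa2]; push_cast; ring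
  have fa4 : (Nat.factorial (a+4) : ℚ) = (a+1)*(a+2)*(a+3)*(a+4)*Nat.factorial a := by
    rw [ea (a+3), fa3]; push_cast; ring
  have fb2 : (Nat.factorial (b+2) : ℚ) = (b+1)*(b+2)*Nat.factorial b := by
    rw [ea (b+1), ea b]; push_cast; ring
  have fb3 : (Nat.factorial (b+3) : ℚ) = (b+1)*(b+2)*(b+3)*Nat.factorial b := by
    rw [ea (b+2), fb2]; push_cast; ring
  have fb4 : (Nat.factorial (b+4) : ℚ) = (b+1)*(b+2)*(b+3)*(b+4)*Nat.factorial b := by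
    rw [ea (b+3), fb3]; push_cast; ring
  set G : ℚ := (Nat.factorial n : ℚ) / (Nat.factorial (a+4) * Nat.factorial (b+4)) with hG
  have hA : (((n).choose a : ℕ) : ℚ) = (a+1)*(a+2)*(a+3)*(a+4) * G := by
    rw [Nat.cast_choose ℚ (by omega), show n - a = b+4 from by omega, hG, fa4]
    field_simp
  have hB : (((n).choose (a+1) : ℕ) : ℚ) = (a+2)*(a+3)*(a+4)*(b+4) * G := by
    rw [Nat.cast_choose ℚ (by omega), show n - (a+1) = b+3 from by omega, hG, fa4, ea a, fb4, fb3]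
    field_simp
  have hC : (((n).choose (a+2) : ℕ) : ℚ) = (a+3)*(a+4)*(b+3)*(b+4) * G := by
    rw [Nat.cast_choose ℚ (by omega), show n - (a+2) = b+2 from by omega, hG, fa4, fa2, fb4, fb2]
    field_simp
  have hD : (((n).choose (a+3) : ℕ) : ℚ) = (a+4)*(b+2)*(b+3)*(b+4) * G := by
    rw [Nat.cast_choose ℚ (by omega), show n - (a+3) = b+1 from by omega, hG, fa4, fa3, fb4, ea b]
    field_simp
  have hE : (((n).choose (a+4) : ℕ) : ℚ) = (b+1)*(b+2)*(b+3)*(b+4) * G := by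
    rw [Nat.cast_choose ℚ (by omega), show n - (a+4) = b from by omega, hG, fb4]
    field_simp
  have hR : 2 * (Nat.factorial (a+2+(b+2)) : ℚ) * (Nat.factorial (a+2+(b+2)+1)) * (Nat.factorial (a+2+(b+2)+2)) /
        ((Nat.factorial (a+2)) * (Nat.factorial (a+2+1)) * (Nat.factorial (a+2+2)) *
         (Nat.factorial (b+2)) * (Nat.factorial (b+2+1)) * (Nat.factorial (b+2+2)))
      = 2*((a:ℚ)+b+5)^2*((a:ℚ)+b+6)*((a:ℚ)+3)*((a:ℚ)+4)^2*((b:ℚ)+3)*((b:ℚ)+4)^2 * G^3 := by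
    have e1 : (Nat.factorial (a+2+(b+2)+1) : ℚ) = ((a:ℚ)+b+5) * Nat.factorial n := by
      rw [show a+2+(b+2)+1 = n+1 from by omega, ea n, hn]; push_cast; ring
    have e2 : (Nat.factorial (a+2+(b+2)+2) : ℚ) = ((a:ℚ)+b+6) * (((a:ℚ)+b+5) * Nat.factorial n) := by
      rw [show a+2+(b+2)+2 = n+1+1 from by omega, ea (n+1), ea n, hn]; push_cast; ring
    rw [e1, e2, show a+2+(b+2) = n from by omega,
        show a+2+1 = a+3 from rfl, show a+2+2 = a+4 from rfl,
        show b+2+1 = b+3 from rfl, show b+2+2 = b+4 from rfl, hG]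
    rw [div_pow, ← mul_div_assoc, div_eq_div_iff (by positivity) (by positivity),
        fa2, fa3, fa4, fb2, fb3, fb4]
    ring
  set z : ℤ := (n.choose (a+2) : ℤ)^3 + (n.choose (a+4) : ℤ)*(n.choose (a+1) : ℤ)^2
      + (n.choose a : ℤ)*(n.choose (a+3) : ℤ)^2
      - 2*(n.choose (a+1) : ℤ)*(n.choose (a+2) : ℤ)*(n.choose (a+3) : ℤ)
      - (n.choose a : ℤ)*(n.choose (a+2) : ℤ)*(n.choose (a+4) : ℤ) with hzdef
  have hzq : (z : ℚ) = 2 * (Nat.factorial (a+2+(b+2)) : ℚ) * (Nat.factorial (a+2+(b+2)+1)) * (Nat.factorial (a+2+(b+2)+2)) /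
        ((Nat.factorial (a+2)) * (Nat.factorial (a+2+1)) * (Nat.factorial (a+2+2)) *
         (Nat.factorial (b+2)) * (Nat.factorial (b+2+1)) * (Nat.factorial (b+2+2))) := by
    rw [hR]
    push_cast [hzdef]
    rw [hA, hB, hC, hD, hE]
    linear_combination (G:ℚ)^3 * baxter_poly_id (a:ℚ) (b:ℚ)
  have hpos : 0 < z := by
    have h1 : (0:ℚ) < (z:ℚ) := by
      rw [hzq, hR]
      have hGpos : 0 < G := by
        rw [hG]
        have p : ∀ k : ℕ, (0:ℚ) < Nat.factorial k := fun k => by exact_mod_cast k.factorial_pos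
        have := p n; have := p (a+4); have := p (b+4)
        positivity
      positivity
    exact_mod_cast h1
  refine ⟨z.toNat, by omega, ?_⟩
  have hc : ((z.toNat : ℕ) : ℚ) = (z : ℚ) := by
    exact_mod_cast congrArg (Int.cast : ℤ → ℚ) (Int.toNat_of_nonneg hpos.le)
  rw [hc]; exact hzq
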